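/- Let C ≥ 1 be an integer, ε ≥ 0 a real number, and q a positive probability vector on Fin C. If KL(U ‖ q) ≤ ε, then MSP(q) ≤ 1/C + Real.sqrt (ε/2). -/

import Mathlib

/-- `p` is a positive probability vector on `Fin C`. -/
def IsPosProbVec {C : ℕ} (p : Fin C → ℝ) : Prop :=
  (∀ i, 0 < p i) ∧ ∑ i, p i = 1

/-- The uniform probability vector on `Fin C`. -/
noncomputable def unif (C : ℕ) : Fin C → ℝ := fun _ => 1 / (C : ℝ)

/-- Maximum softmax probability: the maximum of `p` over `Fin C`. -/
noncomputable def MSP {C : ℕ} (p : Fin C → ℝ) : ℝ := ⨆ i, p i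

/-- KL divergence `KL(a ‖ b) = ∑ i, a i * log (a i / b i)`; terms with
`a i = 0` contribute `0` (which holds since `0 * log (0 / b i) = 0`). -/
noncomputable def KLdiv {C : ℕ} (a b : Fin C → ℝ) : ℝ :=
  ∑ i, a i * Real.log (a i / b i)

lemma pinsker2 (u M : ℝ) (hu : 0 < u) (huM : u ≤ M) (hM : M < 1) :
    2*(M-u)^2 ≤ u * Real.log (u/M) + (1-u) * Real.log ((1-u)/(1-M)) := by
  rcases eq_or_lt_of_le huM with rfl | hlt
  · simp [div_self hu.ne', div_self (show (1:ℝ)-u ≠ 0 by linarith)]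
  have hu1 : u < 1 := lt_trans hlt hM
  have hM0 : 0 < M := lt_trans hu hlt
  set g : ℝ → ℝ := fun x =>
    u * (Real.log u - Real.log x) + (1-u) * (Real.log (1-u) - Real.log (1-x))
      - 2*(x-u)^2 with hg
  have key : ∀ x, 0 < x → x < 1 →
      HasDerivAt g (-(u/x) + (1-u)/(1-x) - 4*(x-u)) x := by
    intro x hx0 hx1
    have h1 : HasDerivAt (fun x : ℝ => Real.log x) (1/x) x := by
      simpa [one_div] using Real.hasDerivAt_log hx0.ne'
    have h2 : HasDerivAt (fun x : ℝ => (1:ℝ) - x) (-1) x := by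
      simpa using (hasDerivAt_id x).const_sub 1
    have h3 : HasDerivAt (fun x : ℝ => Real.log (1-x)) ((1-x)⁻¹ * (-1)) x :=
      (Real.hasDerivAt_log (by linarith)).comp x h2
    have t1 : HasDerivAt (fun x => u * (Real.log u - Real.log x)) (u * (0 - 1/x)) x :=
      ((hasDerivAt_const x (Real.log u)).sub h1).const_mul u
    have t2 : HasDerivAt (fun x => (1-u) * (Real.log (1-u) - Real.log (1-x)))
        ((1-u) * (0 - (1-x)⁻¹ * (-1))) x :=
      ((hasDerivAt_const x (Real.log (1-u))).sub h3).const_mul (1-u)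
    have t3 : HasDerivAt (fun x : ℝ => 2*(x-u)^2) (2*(2*(x-u)^1*1)) x :=
      (((hasDerivAt_id x).sub_const u).pow 2).const_mul 2
    have hfin := (t1.add t2).sub t3
    refine hfin.congr_deriv ?_
    ring
  have mono : MonotoneOn g (Set.Icc u M) := by
    have c1 : ContinuousOn (fun x : ℝ => Real.log x) (Set.Icc u M) :=
      Real.continuousOn_log.mono (fun x hx =>
        Set.mem_compl_singleton_iff.mpr (ne_of_gt (lt_of_lt_of_le hu hx.1)))
    have c2 : ContinuousOn (fun x : ℝ => Real.log (1-x)) (Set.Icc u M) :=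
      Real.continuousOn_log.comp (continuousOn_const.sub continuousOn_id)
        (fun x hx => Set.mem_compl_singleton_iff.mpr (by
          have := hx.2; intro h; linarith))
    apply monotoneOn_of_deriv_nonneg (convex_Icc u M)
    · exact ((continuousOn_const.mul (continuousOn_const.sub c1)).add
        (continuousOn_const.mul (continuousOn_const.sub c2))).sub
        (continuousOn_const.mul ((continuousOn_id.sub continuousOn_const).pow 2))
    · intro x hx
      rw [interior_Icc] at hx
      exact ((key x (lt_trans hu hx.1) (lt_trans hx.2 hM)).differentiableAt).differentiableWithinAt
    · intro x hx
      rw [interior_Icc] at hx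
      obtain ⟨hx1, hx2⟩ := hx
      have hx0 : 0 < x := lt_trans hu hx1
      have hx1' : x < 1 := lt_trans hx2 hM
      rw [(key x hx0 hx1').deriv]
      have e1 : u/x * x = u := div_mul_cancel₀ u hx0.ne'
      have e2 : (1-u)/(1-x) * (1-x) = 1-u := div_mul_cancel₀ _ (by linarith)
      nlinarith [sq_nonneg (2*x-1), mul_pos hx0 (by linarith : (0:ℝ) < 1-x),
        div_nonneg (by linarith : (0:ℝ) ≤ u) hx0.le,
        div_nonneg (by linarith : (0:ℝ) ≤ 1-u) (by linarith : (0:ℝ) ≤ 1-x)]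
  have hgM : g u ≤ g M := mono (Set.left_mem_Icc.mpr huM) (Set.right_mem_Icc.mpr huM) huM
  rw [Real.log_div hu.ne' hM0.ne',
    Real.log_div (show (1-u) ≠ 0 by linarith) (show (1-M) ≠ 0 by linarith)]
  simp only [hg, sub_self, mul_zero, zero_add, zero_sub, sub_zero] at hgM
  nlinarith [hgM]


/-- If `q` is KL-close to uniform, then its maximum softmax probability is
close to `1/C`. -/
theorem MSP_le_of_KL_unif_le
    (C : ℕ) (hC : 1 ≤ C) (ε : ℝ) (hε : 0 ≤ ε)
    (q : Fin C → ℝ) (hq : IsPosProbVec q)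
    (hKL : KLdiv (unif C) q ≤ ε) :
    MSP q ≤ 1 / (C : ℝ) + Real.sqrt (ε / 2) := by
  obtain ⟨hpos, hsum⟩ := hq
  have hC0 : (0:ℝ) < C := by exact_mod_cast Nat.lt_of_lt_of_le Nat.zero_lt_one hC
  haveI : NeZero C := ⟨by omega⟩
  obtain ⟨i0, hi0⟩ : ∃ i0, ∀ i, q i ≤ q i0 := Finite.exists_max q
  set M := q i0 with hMdef
  have hMSP : MSP q ≤ M := ciSup_le hi0
  have hM1 : M ≤ 1 := by
    rw [← hsum]
    exact Finset.single_le_sum (fun i _ => (hpos i).le) (Finset.mem_univ i0)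
  have huM : 1/(C:ℝ) ≤ M := by
    have h : (1:ℝ) ≤ (C:ℝ) * M := by
      calc (1:ℝ) = ∑ i, q i := hsum.symm
        _ ≤ ∑ _i : Fin C, M := Finset.sum_le_sum (fun i _ => hi0 i)
        _ = (C:ℝ) * M := by
            rw [Finset.sum_const, Finset.card_univ, Fintype.card_fin, nsmul_eq_mul]
    rw [div_le_iff₀ hC0]
    linarith
  have hsqrt : (0:ℝ) ≤ Real.sqrt (ε/2) := Real.sqrt_nonneg _
  rcases eq_or_lt_of_le hC with h1 | h2
  · -- C = 1
    have : (C:ℝ) = 1 := by exact_mod_cast h1.symm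
    rw [this]
    calc MSP q ≤ M := hMSP
      _ ≤ 1 := hM1
      _ ≤ 1/1 + Real.sqrt (ε/2) := by simpa using hsqrt
  · -- C ≥ 2
    have hK : (0:ℝ) < (C:ℝ) - 1 := by
      have : (2:ℝ) ≤ C := by exact_mod_cast h2
      linarith
    set u : ℝ := 1/(C:ℝ) with hu
    have hu0 : 0 < u := by positivity
    set t := Finset.univ.erase i0 with ht
    have htcard : (t.card : ℝ) = (C:ℝ) - 1 := by
      rw [ht, Finset.card_erase_of_mem (Finset.mem_univ i0), Finset.card_univ,
        Fintype.card_fin, Nat.cast_sub hC, Nat.cast_one]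
    have htne : t.Nonempty := by
      rw [← Finset.card_pos]
      have : (0:ℝ) < t.card := by rw [htcard]; linarith
      exact_mod_cast this
    have hsum_t : ∑ j ∈ t, q j = 1 - M := by
      have h := Finset.add_sum_erase Finset.univ q (Finset.mem_univ i0)
      rw [hsum] at h
      linarith [h]
    have hMlt : M < 1 := by
      have hpos_t : 0 < ∑ j ∈ t, q j :=
        Finset.sum_pos (fun j _ => hpos j) htne
      linarith [hsum_t ▸ hpos_t]
    -- Jensen
    have hJ : ∑ j ∈ t, (1/((C:ℝ)-1)) • Real.log (q j)
        ≤ Real.log (∑ j ∈ t, (1/((C:ℝ)-1)) • q j) := by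
      apply strictConcaveOn_log_Ioi.concaveOn.le_map_sum
      · intro i _; positivity
      · rw [Finset.sum_const, nsmul_eq_mul, htcard]
        field_simp
      · intro j _; exact hpos j
    have hJ' : ∑ j ∈ t, Real.log (q j) ≤ ((C:ℝ)-1) * Real.log ((1-M)/((C:ℝ)-1)) := by
      have e1 : ∑ j ∈ t, (1/((C:ℝ)-1)) • q j = (1-M)/((C:ℝ)-1) := by
        simp only [smul_eq_mul, ← Finset.mul_sum, hsum_t]
        ring
      have e2 : ∑ j ∈ t, (1/((C:ℝ)-1)) • Real.log (q j)
          = (1/((C:ℝ)-1)) * ∑ j ∈ t, Real.log (q j) := by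
        simp [Finset.mul_sum]
      rw [e1, e2] at hJ
      rw [← mul_le_mul_iff_right₀ (show (0:ℝ) < 1/((C:ℝ)-1) by positivity)]
      calc (1/((C:ℝ)-1)) * ∑ j ∈ t, Real.log (q j)
          ≤ Real.log ((1-M)/((C:ℝ)-1)) := hJ
        _ = (1/((C:ℝ)-1)) * (((C:ℝ)-1) * Real.log ((1-M)/((C:ℝ)-1))) := by
            field_simp
    -- expand KL
    have hKL1 : KLdiv (unif C) q = u * Real.log (u/M) + ∑ j ∈ t, u * Real.log (u/(q j)) := by
      rw [KLdiv]
      have := Finset.add_sum_erase Finset.univ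
        (fun i => unif C i * Real.log (unif C i / q i)) (Finset.mem_univ i0)
      rw [← this]
      simp [unif, hu, hMdef, ht]
    have hlog_t : ∑ j ∈ t, u * Real.log (u/(q j))
        = ((C:ℝ)-1) * u * Real.log u - u * ∑ j ∈ t, Real.log (q j) := by
      have : ∀ j ∈ t, u * Real.log (u/(q j)) = u * Real.log u - u * Real.log (q j) := by
        intro j _
        rw [Real.log_div hu0.ne' (hpos j).ne']
        ring
      rw [Finset.sum_congr rfl this, Finset.sum_sub_distrib, Finset.sum_const,
        ← Finset.mul_sum]
      rw [nsmul_eq_mul, htcard]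
      ring
    have hbound : u * Real.log (u/M) + (1-u) * Real.log ((1-u)/(1-M)) ≤ ε := by
      have key : (1-u) * Real.log ((1-u)/(1-M))
          = ((C:ℝ)-1) * u * Real.log u - u * (((C:ℝ)-1) * Real.log ((1-M)/((C:ℝ)-1))) := by
        have h1u : 1 - u = ((C:ℝ)-1)/(C:ℝ) := by
          rw [hu]; field_simp
        have hKu : ((C:ℝ)-1) * u = 1 - u := by
          rw [h1u, hu]; field_simp
        rw [Real.log_div (by linarith : (1:ℝ)-u ≠ 0) (by linarith : (1:ℝ)-M ≠ 0),
          Real.log_div (by linarith : (1:ℝ)-M ≠ 0) (by linarith : (C:ℝ)-1 ≠ 0)]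
        rw [h1u, Real.log_div (by linarith : (C:ℝ)-1 ≠ 0) hC0.ne',
          hu, Real.log_div one_ne_zero hC0.ne', Real.log_one]
        have hKu' : (((C:ℝ)-1)/(C:ℝ)) = 1 - 1/(C:ℝ) := by field_simp
        rw [hKu']
        have hCne : (C:ℝ) ≠ 0 := hC0.ne'
        field_simp
        ring
      have : ((C:ℝ)-1) * u * Real.log u - u * (((C:ℝ)-1) * Real.log ((1-M)/((C:ℝ)-1)))
          ≤ ∑ j ∈ t, u * Real.log (u/(q j)) := by
        rw [hlog_t]
        have := mul_le_mul_of_nonneg_left hJ' hu0.le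
        linarith
      rw [key]
      rw [hKL1] at hKL
      linarith
    have hpin := pinsker2 u M hu0 huM hMlt
    have hsq : (M - u)^2 ≤ ε/2 := by nlinarith
    have : M - u ≤ Real.sqrt (ε/2) := by
      have h := Real.sqrt_le_sqrt hsq
      rwa [Real.sqrt_sq (by linarith : 0 ≤ M - u)] at h
    rw [hu] at this
    linarith
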